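/- Update answer sets violate postulate (K5): there exists an update sequence (P⃗, P) with P satisfiable but (P⃗, P) unsatisfiable. Witness: P⃗ = { a ←, ¬a ← } and P = { b ← }. -/

import Mathlib

/-- A literal over atoms `α`: an atom or a strongly negated atom. -/
inductive Lit (α : Type) where
  | pos : α → Lit α
  | neg : α → Lit α

/-- The complementary literal. -/
def Lit.compl {α : Type} : Lit α → Lit α
  | .pos a => .neg a
  | .neg a => .pos a

/-- A rule of an extended logic program: optional head literal,
prerequisites `prem`, and weakly negated body literals `nbody`. -/
structure Rule (α : Type) where
  head : Option (Lit α)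
  prem : Set (Lit α)
  nbody : Set (Lit α)

/-- A set of literals is consistent iff it contains no complementary pair. -/
def Consistent {α : Type} (S : Set (Lit α)) : Prop :=
  ∀ a : α, ¬ (Lit.pos a ∈ S ∧ Lit.neg a ∈ S)

/-- The body of `r` is true in `S`. -/
def BodyTrue {α : Type} (S : Set (Lit α)) (r : Rule α) : Prop :=
  r.prem ⊆ S ∧ ∀ L ∈ r.nbody, L ∉ S

/-- The head of `r` is true in `S` (false for constraints). -/
def HeadTrue {α : Type} (S : Set (Lit α)) (r : Rule α) : Prop :=
  ∃ L, r.head = some L ∧ L ∈ S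

/-- Rule `r` is true in `S`. -/
def RuleTrue {α : Type} (S : Set (Lit α)) (r : Rule α) : Prop :=
  BodyTrue S r → HeadTrue S r

/-- `S` is a model of program `P`. -/
def IsModel {α : Type} (S : Set (Lit α)) (P : Set (Rule α)) : Prop :=
  ∀ r ∈ P, RuleTrue S r

/-- `r` is defeated by `S`. -/
def Defeated {α : Type} (S : Set (Lit α)) (r : Rule α) : Prop :=
  ∃ L ∈ r.nbody, L ∈ S

/-- The Gelfond–Lifschitz reduct of `P` relative to `S`. -/
def Reduct {α : Type} (P : Set (Rule α)) (S : Set (Lit α)) : Set (Rule α) :=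
  { r' | ∃ r ∈ P, ¬ Defeated S r ∧ r' = Rule.mk r.head r.prem ∅ }

/-- `S` is an answer set of `P`: a consistent set of literals that is a
minimal model of the reduct `P^S`. -/
def IsAnswerSet {α : Type} (P : Set (Rule α)) (S : Set (Lit α)) : Prop :=
  Consistent S ∧ IsModel S (Reduct P S) ∧
    ∀ T ⊆ S, IsModel T (Reduct P S) → T = S

/-- The belief set of `P`: all rules true in every answer set of `P`. -/
def Bel {α : Type} (P : Set (Rule α)) : Set (Rule α) :=
  { r | ∀ S, IsAnswerSet P S → RuleTrue S r }
/-- Extended alphabet `At*`: original atoms, indexed copies `A_i`,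
and rejection atoms `rej(r)` for (named copies of) rules. -/
inductive ExtAtom (α : Type) where
  | base : α → ExtAtom α
  | idx : ℕ → α → ExtAtom α
  | rej : ℕ → Rule α → ExtAtom α

/-- Lift a literal over `α` to the corresponding literal over `At*`. -/
def liftLit {α : Type} : Lit α → Lit (ExtAtom α)
  | .pos a => .pos (.base a)
  | .neg a => .neg (.base a)

/-- The indexed copy `L_i` of a literal `L`. -/
def idxLit {α : Type} (i : ℕ) : Lit α → Lit (ExtAtom α)
  | .pos a => .pos (.idx i a)
  | .neg a => .neg (.idx i a)

/-- Literal `L` occurs in the update sequence `(P 0, …, P (n-1))`. -/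
def OccursIn {α : Type} (n : ℕ) (P : ℕ → Set (Rule α)) (L : Lit α) : Prop :=
  ∃ i < n, ∃ r ∈ P i, r.head = some L ∨ L ∈ r.prem ∨ L ∈ r.nbody

/-- The update program `P_◁` of the update sequence `(P 0, …, P (n-1))`,
an ELP over the extended alphabet `At*`. -/
def UpdProgram {α : Type} (n : ℕ) (P : ℕ → Set (Rule α)) : Set (Rule (ExtAtom α)) :=
  -- (i) all constraints
  { r' | ∃ i < n, ∃ r ∈ P i, r.head = none ∧
      r' = Rule.mk none (liftLit '' r.prem) (liftLit '' r.nbody) } ∪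
  -- (ii)  L_i ← B(r), not rej(r)
  { r' | ∃ i < n, ∃ r ∈ P i, ∃ L, r.head = some L ∧
      r' = Rule.mk (some (idxLit i L)) (liftLit '' r.prem)
             ((liftLit '' r.nbody) ∪ {Lit.pos (ExtAtom.rej i r)}) } ∪
  -- (iii)  rej(r) ← B(r), ¬L_{i+1}
  { r' | ∃ i, i + 1 < n ∧ ∃ r ∈ P i, ∃ L, r.head = some L ∧
      r' = Rule.mk (some (Lit.pos (ExtAtom.rej i r)))
             ((liftLit '' r.prem) ∪ {idxLit (i+1) L.compl}) (liftLit '' r.nbody) } ∪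
  -- (iv) inertia rules  L_i ← L_{i+1}  and  L ← L_1
  { r' | ∃ L, OccursIn n P L ∧
      ((∃ i, i + 1 < n ∧ r' = Rule.mk (some (idxLit i L)) {idxLit (i+1) L} ∅) ∨
        r' = Rule.mk (some (liftLit L)) {idxLit 0 L} ∅) }

/-- `S` is an update answer set of the sequence `(P 0, …, P (n-1))`:
the restriction to `Lit_At` of an answer set of the update program. -/
def UpdateAnswerSet {α : Type} (n : ℕ) (P : ℕ → Set (Rule α)) (S : Set (Lit α)) : Prop :=
  ∃ S' : Set (Lit (ExtAtom α)), IsAnswerSet (UpdProgram n P) S' ∧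
    S = { L | liftLit L ∈ S' }

/-- Two rules are conflicting iff their heads are complementary literals. -/
def Conflicting {α : Type} (r r' : Rule α) : Prop :=
  ∃ L, r.head = some L ∧ r'.head = some L.compl

/-- The founded rejection set at level `i`: rules of `P i` rejected by a
conflicting, itself non-rejected rule of some later program. -/
def RejLevel {α : Type} (n : ℕ) (P : ℕ → Set (Rule α)) (S : Set (Lit α)) (i : ℕ) :
    Set (Rule α) :=
  { r | r ∈ P i ∧ ∃ j, ∃ _ : i < j, ∃ _ : j < n, ∃ r',
      r' ∈ P j ∧ r' ∉ RejLevel n P S j ∧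
      Conflicting r r' ∧ BodyTrue S r ∧ BodyTrue S r' }
  termination_by n - i
  decreasing_by omega

/-- The founded rejection set `Rej(S, P⃗)`. -/
def Rej {α : Type} (n : ℕ) (P : ℕ → Set (Rule α)) (S : Set (Lit α)) : Set (Rule α) :=
  { r | ∃ i < n, r ∈ RejLevel n P S i }

/-- The union `∪P⃗` of all rules of the sequence. -/
def UnionSeq {α : Type} (n : ℕ) (P : ℕ → Set (Rule α)) : Set (Rule α) :=
  { r | ∃ i < n, r ∈ P i }

/-- Witness initial program `P⃗ = { a ←, ¬a ← }`. -/
def P1w : Set (Rule Bool) :=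
  {Rule.mk (some (Lit.pos true)) ∅ ∅, Rule.mk (some (Lit.neg true)) ∅ ∅}

/-- Witness update `P = { b ← }`. -/
def P2w : Set (Rule Bool) :=
  {Rule.mk (some (Lit.pos false)) ∅ ∅}

/-! ### Auxiliary material for the proof of `k5_fails` -/

/-- The witness sequence. -/
abbrev Pseq : ℕ → Set (Rule Bool) := fun i => if i = 0 then P1w else P2w

/-- "Unsupported" literals: rejection atoms and level-1 copies of `a`. -/
def Bad : Set (Lit (ExtAtom Bool)) :=
  {L | (∃ i r, L = Lit.pos (ExtAtom.rej i r)) ∨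
       L = Lit.pos (ExtAtom.idx 1 true) ∨ L = Lit.neg (ExtAtom.idx 1 true)}

lemma k5_part1 : ∃ S : Set (Lit Bool), IsAnswerSet P2w S := by
  refine ⟨{Lit.pos false}, ?_, ?_, ?_⟩
  · rintro a ⟨-, h2⟩
    simp only [Set.mem_singleton_iff] at h2
    cases h2
  · rintro r' ⟨r, hr, -, rfl⟩
    have hr' : r = Rule.mk (some (Lit.pos false)) ∅ ∅ := hr
    subst hr'
    intro _
    exact ⟨_, rfl, rfl⟩
  · intro T hT hM
    refine Set.Subset.antisymm hT ?_
    have hmem : (Rule.mk (some (Lit.pos false)) ∅ ∅ : Rule Bool) ∈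
        Reduct P2w {Lit.pos false} := by
      refine ⟨Rule.mk (some (Lit.pos false)) ∅ ∅, rfl, ?_, rfl⟩
      rintro ⟨L, hL, -⟩
      exact Set.notMem_empty L hL
    have hbt : BodyTrue T (Rule.mk (some (Lit.pos false)) ∅ ∅ : Rule Bool) :=
      ⟨Set.empty_subset _, fun L h => absurd h (Set.notMem_empty L)⟩
    obtain ⟨L, hL, hLT⟩ := hM _ hmem hbt
    simp only [Option.some.injEq] at hL
    subst hL
    rintro x hx
    rcases hx with rfl
    exact hLT

/-- Non-rejected inertia: any literal that heads a rule of `P1w`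
belongs (lifted) to every answer set of the update program. -/
lemma k5_derive (S' : Set (Lit (ExtAtom Bool)))
    (hmod : IsModel S' (Reduct (UpdProgram 2 Pseq) S'))
    (hbad : ∀ L ∈ Bad, L ∉ S')
    (r0 : Rule Bool) (hr0 : r0 ∈ P1w) (L0 : Lit Bool) (hL0 : r0.head = some L0) :
    liftLit L0 ∈ S' := by
  have hr0' : r0 ∈ Pseq 0 := by simpa [Pseq, P1w] using hr0
  -- Step 1: the level-0 copy of L0 is in S'.
  have hidx : idxLit 0 L0 ∈ S' := by
    have hmem : (Rule.mk (some (idxLit 0 L0)) (liftLit '' r0.prem)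
        ((liftLit '' r0.nbody) ∪ {Lit.pos (ExtAtom.rej 0 r0)}))
        ∈ UpdProgram 2 Pseq := by
      refine Or.inl (Or.inl (Or.inr ?_))
      exact ⟨0, by norm_num, r0, hr0', L0, hL0, rfl⟩
    have hprem : r0.prem = ∅ := by
      rcases hr0 with rfl | rfl <;> rfl
    have hnbody : r0.nbody = ∅ := by
      rcases hr0 with rfl | rfl <;> rfl
    have hnd : ¬ Defeated S' (Rule.mk (some (idxLit 0 L0)) (liftLit '' r0.prem)
        ((liftLit '' r0.nbody) ∪ {Lit.pos (ExtAtom.rej 0 r0)})) := by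
      rintro ⟨L, hL, hLS⟩
      simp only [hnbody, Set.image_empty, Set.empty_union,
        Set.mem_singleton_iff] at hL
      subst hL
      exact hbad _ (Or.inl ⟨0, r0, rfl⟩) hLS
    have hred : (Rule.mk (some (idxLit 0 L0)) (liftLit '' r0.prem) ∅ :
        Rule (ExtAtom Bool)) ∈ Reduct (UpdProgram 2 Pseq) S' :=
      ⟨_, hmem, hnd, rfl⟩
    have hbt : BodyTrue S' (Rule.mk (some (idxLit 0 L0)) (liftLit '' r0.prem) ∅ :
        Rule (ExtAtom Bool)) := by
      constructor
      · simp [hprem]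
      · intro L h; exact absurd h (Set.notMem_empty L)
    obtain ⟨M, hM, hMS⟩ := hmod _ hred hbt
    simp only [Option.some.injEq] at hM
    subst hM
    exact hMS
  -- Step 2: inertia rule `L ← L_0`.
  have hocc : OccursIn 2 Pseq L0 := ⟨0, by norm_num, r0, hr0', Or.inl hL0⟩
  have hmem : (Rule.mk (some (liftLit L0)) {idxLit 0 L0} ∅ :
      Rule (ExtAtom Bool)) ∈ UpdProgram 2 Pseq :=
    Or.inr ⟨L0, hocc, Or.inr rfl⟩
  have hnd : ¬ Defeated S' (Rule.mk (some (liftLit L0)) {idxLit 0 L0} ∅ :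
      Rule (ExtAtom Bool)) := by
    rintro ⟨L, hL, -⟩
    exact Set.notMem_empty L hL
  have hred : (Rule.mk (some (liftLit L0)) {idxLit 0 L0} ∅ :
      Rule (ExtAtom Bool)) ∈ Reduct (UpdProgram 2 Pseq) S' :=
    ⟨_, hmem, hnd, rfl⟩
  have hbt : BodyTrue S' (Rule.mk (some (liftLit L0)) {idxLit 0 L0} ∅ :
      Rule (ExtAtom Bool)) := by
    constructor
    · intro L hL; rcases hL with rfl; exact hidx
    · intro L h; exact absurd h (Set.notMem_empty L)
  obtain ⟨M, hM, hMS⟩ := hmod _ hred hbt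
  simp only [Option.some.injEq] at hM
  subst hM
  exact hMS

lemma k5_part2 :
    ¬ ∃ S : Set (Lit Bool), UpdateAnswerSet 2 Pseq S := by
  rintro ⟨S, S', ⟨hcons, hmod, hmin⟩, -⟩
  -- Step 1: no `Bad` literal is in S'.
  have hbad : ∀ L ∈ Bad, L ∉ S' := by
    have hT : S' \ Bad = S' := by
      apply hmin _ Set.diff_subset
      rintro r' ⟨r, hr, hnd, rfl⟩ ⟨hprem, -⟩
      have hprem' : r.prem ⊆ S' := hprem.trans Set.diff_subset
      have hht : HeadTrue S' (Rule.mk r.head r.prem ∅) :=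
        hmod _ ⟨r, hr, hnd, rfl⟩
          ⟨hprem', fun L h => absurd h (Set.notMem_empty L)⟩
      obtain ⟨M, hM, hMS⟩ := hht
      refine ⟨M, hM, hMS, ?_⟩
      intro hMB
      -- case analysis on where r comes from in the update program
      rcases hr with ((h | h) | h) | h
      · -- constraints: head is none
        obtain ⟨i, hi, s, hs, hh, rfl⟩ := h
        cases hM
      · -- rules (ii): head is an indexed copy of a head of P i
        obtain ⟨i, hi, s, hs, L1, hL1, rfl⟩ := h
        simp only [Option.some.injEq] at hM
        subst hM
        rcases hMB with ⟨i', r', hM⟩ | hM | hM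
        · cases L1 <;> simp [idxLit] at hM
        · cases L1 with
          | pos a =>
            simp only [idxLit, Lit.pos.injEq, ExtAtom.idx.injEq] at hM
            obtain ⟨rfl, rfl⟩ := hM
            have hs2 : s ∈ P2w := by simpa [Pseq] using hs
            rcases hs2 with rfl
            simp at hL1
          | neg a => simp [idxLit] at hM
        · cases L1 with
          | neg a =>
            simp only [idxLit, Lit.neg.injEq, ExtAtom.idx.injEq] at hM
            obtain ⟨rfl, rfl⟩ := hM
            have hs2 : s ∈ P2w := by simpa [Pseq] using hs
            rcases hs2 with rfl
            simp at hL1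
          | pos a => simp [idxLit] at hM
      · -- rules (iii): their prem contains a Bad literal, contradicting prem ⊆ S' \ Bad
        obtain ⟨i, hi, s, hs, L1, hL1, rfl⟩ := h
        have hi0 : i = 0 := by omega
        subst hi0
        have hsP : s ∈ P1w := by simpa [Pseq] using hs
        have hinP : idxLit 1 L1.compl ∈
            (liftLit '' s.prem) ∪ {idxLit 1 L1.compl} :=
          Set.mem_union_right _ rfl
        have hin : idxLit 1 L1.compl ∈ S' \ Bad := hprem hinP
        apply hin.2
        rcases hsP with rfl | rfl
        · have : L1 = Lit.pos true := by
            simpa using hL1.symm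
          subst this
          exact Or.inr (Or.inr rfl)
        · have : L1 = Lit.neg true := by
            simpa using hL1.symm
          subst this
          exact Or.inr (Or.inl rfl)
      · -- rules (iv): heads are level-0 or base literals
        obtain ⟨L1, -, hcase⟩ := h
        rcases hcase with ⟨i, hi, rfl⟩ | rfl
        · have hi0 : i = 0 := by omega
          subst hi0
          simp only [Option.some.injEq] at hM
          subst hM
          rcases hMB with ⟨i', r', hM⟩ | hM | hM
          · cases L1 <;> simp [idxLit] at hM
          · cases L1 <;> simp [idxLit] at hM
          · cases L1 <;> simp [idxLit] at hM
        · simp only [Option.some.injEq] at hM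
          subst hM
          rcases hMB with ⟨i', r', hM⟩ | hM | hM
          · cases L1 <;> simp [liftLit] at hM
          · cases L1 <;> simp [liftLit] at hM
          · cases L1 <;> simp [liftLit] at hM
    intro L hLB hLS
    have : L ∈ S' \ Bad := hT.symm ▸ hLS
    exact this.2 hLB
  -- Step 2: both a and ¬a are in S', contradicting consistency.
  have hpos : Lit.pos (ExtAtom.base true) ∈ S' :=
    k5_derive S' hmod hbad (Rule.mk (some (Lit.pos true)) ∅ ∅)
      (Set.mem_insert _ _) (Lit.pos true) rfl
  have hneg : Lit.neg (ExtAtom.base true) ∈ S' :=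
    k5_derive S' hmod hbad (Rule.mk (some (Lit.neg true)) ∅ ∅)
      (Set.mem_insert_of_mem _ rfl) (Lit.neg true) rfl
  exact hcons (ExtAtom.base true) ⟨hpos, hneg⟩

/-- postulate (K5) fails: `P` is satisfiable but the update
sequence `(P⃗, P)` has no update answer set. -/
theorem k5_fails :
    (∃ S : Set (Lit Bool), IsAnswerSet P2w S) ∧
    ¬ ∃ S : Set (Lit Bool),
        UpdateAnswerSet 2 (fun i => if i = 0 then P1w else P2w) S := by
  exact ⟨k5_part1, k5_part2⟩
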